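/- Every satisfying assignment of the threshold formula THR_k(s) sets at least k of the selector variables s_1,...,s_m to true. -/

import Mathlib

/-- Every satisfying assignment of the threshold formula `THR_k(s)` — with selector
variables `s_i`, mapping variables `p_{b,i}`, and extension variables `y_{b,j}` — sets
at least `k` of the selector variables to true. -/
theorem thr_forces_k_selectors (k m : ℕ) (s : Fin m → Bool)
    (p : Fin k → Fin m → Bool) (y : Fin k → Fin (m + 1) → Bool)
    (hy0 : ∀ b : Fin k, y b 0 = true)
    (hchain : ∀ (b : Fin k) (i : Fin m),
      y b i.castSucc = false ∨ p b i = true ∨ y b i.succ = true)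
    (hym : ∀ b : Fin k, y b (Fin.last m) = false)
    (hinj : ∀ (b b' : Fin k) (i : Fin m), b ≠ b' → (p b i = false ∨ p b' i = false))
    (hsel : ∀ (b : Fin k) (i : Fin m), p b i = false ∨ s i = true) :
    k ≤ (Finset.univ.filter fun i : Fin m => s i = true).card := by
  have hex : ∀ b : Fin k, ∃ i : Fin m, p b i = true := by
    intro b
    by_contra h
    push_neg at h
    have hall : ∀ j : Fin (m + 1), y b j = true := by
      intro j
      induction j using Fin.induction with
      | zero => exact hy0 b
      | succ i ih =>
        rcases hchain b i with h1 | h2 | h3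
        · rw [ih] at h1; exact absurd h1 (by simp)
        · exact absurd h2 (h i)
        · exact h3
    have := hall (Fin.last m)
    rw [hym b] at this
    exact absurd this (by simp)
  choose f hf using hex
  have : k = (Finset.univ : Finset (Fin k)).card := by simp
  rw [this]
  apply Finset.card_le_card_of_injOn f
  · intro b _
    simp only [Finset.mem_coe, Finset.mem_filter, Finset.mem_univ, true_and]
    rcases hsel b (f b) with h | h
    · rw [hf b] at h; exact absurd h (by simp)
    · exact h
  · intro b _ b' _ hbb'
    by_contra hne
    rcases hinj b b' (f b) hne with h | h
    · rw [hf b] at h; exact absurd h (by simp)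
    · rw [hbb', hf b'] at h; exact absurd h (by simp)
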